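/- Let X be a topological space, ≺ a well-ordering of X, and for each x ∈ X let W_x be a closed neighborhood of x (a closed set containing x in its interior) such that y ∉ W_x whenever y ≺ x. Suppose a, b : ω₁ → X are sequences such that b_η ∈ W_{a_ξ} whenever ξ ≤ η < ω₁, and b_ξ ≺ a_δ whenever ξ < δ < ω₁. Then (b_ξ)_{ξ<ω₁} is a free sequence: for every δ < ω₁ the closure of {b_ξ : ξ < δ} is disjoint from the closure of {b_ξ : δ ≤ ξ < ω₁}. Consequently, b is injective and {b_ξ : ξ < ω₁} is an uncountable discrete subspace of X. -/

import Mathlib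

universe u

open Set

/-- The first uncountable ordinal `ω₁`. -/
noncomputable def omega1 : Ordinal.{0} := (Cardinal.aleph 1).ord

/-- Let `X` be a topological space, `r` a well-ordering of `X`, and for each `x ∈ X` let
`W x` be a closed neighborhood of `x` (a closed set containing `x` in its interior) such that
`y ∉ W x` whenever `r y x`.  If `a b : ω₁ → X` are sequences such that `b η ∈ W (a ξ)`
whenever `ξ ≤ η < ω₁`, and `r (b ξ) (a δ)` whenever `ξ < δ < ω₁`, then `(b ξ)_{ξ<ω₁}` is a
free sequence: for every `δ < ω₁` the closure of `{b ξ : ξ < δ}` is disjoint from the closure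
of `{b ξ : δ ≤ ξ < ω₁}`.  Consequently `b` is injective on `ω₁` and
`{b ξ : ξ < ω₁}` is an uncountable discrete subspace of `X`. -/
theorem stmt1 {X : Type u} [TopologicalSpace X]
    (r : X → X → Prop) (hwo : IsWellOrder X r)
    (W : X → Set X)
    (hWcl : ∀ x : X, IsClosed (W x)) (hWnbhd : ∀ x : X, x ∈ interior (W x))
    (hWsep : ∀ x y : X, r y x → y ∉ W x)
    (a b : Ordinal.{0} → X)
    (hab : ∀ ξ η : Ordinal.{0}, ξ ≤ η → η < omega1 → b η ∈ W (a ξ))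
    (hba : ∀ ξ δ : Ordinal.{0}, ξ < δ → δ < omega1 → r (b ξ) (a δ)) :
    (∀ δ < omega1,
      Disjoint (closure (b '' {ξ : Ordinal | ξ < δ}))
        (closure (b '' {ξ : Ordinal | δ ≤ ξ ∧ ξ < omega1}))) ∧
    Set.InjOn b (Set.Iio omega1) ∧
    ¬ (b '' Set.Iio omega1).Countable ∧
    DiscreteTopology ↥(b '' Set.Iio omega1) := by
  haveI := hwo
  have homeg : Order.IsSuccLimit omega1 :=
    Cardinal.isSuccLimit_ord (Cardinal.aleph0_le_aleph 1)
  -- freeness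
  have hfree : ∀ δ < omega1,
      Disjoint (closure (b '' {ξ : Ordinal | ξ < δ}))
        (closure (b '' {ξ : Ordinal | δ ≤ ξ ∧ ξ < omega1})) := by
    intro δ hδ
    rw [Set.disjoint_left]
    intro x hx1 hx2
    have htail : closure (b '' {ξ : Ordinal | δ ≤ ξ ∧ ξ < omega1}) ⊆ W (a δ) := by
      apply closure_minimal _ (hWcl (a δ))
      rintro _ ⟨η, ⟨hδη, hη⟩, rfl⟩
      exact hab δ η hδη hη
    have hxW : x ∈ W (a δ) := htail hx2
    have hnr : ¬ r x (a δ) := fun h => hWsep _ _ h hxW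
    obtain ⟨y, hy, ⟨ξ, hξδ, rfl⟩⟩ :=
      mem_closure_iff.mp hx1 (interior (W x)) isOpen_interior (hWnbhd x)
    have hbW : b ξ ∈ W x := interior_subset hy
    have hnr2 : ¬ r (b ξ) x := fun h => hWsep _ _ h hbW
    have hr : r (b ξ) (a δ) := hba ξ δ hξδ hδ
    rcases trichotomous_of r (b ξ) x with h | h | h
    · exact hnr2 h
    · exact hnr (h ▸ hr)
    · exact hnr (IsTrans.trans _ _ _ h hr)
  -- injectivity
  have key : ∀ ξ η : Ordinal, ξ < η → η < omega1 → b ξ ≠ b η := by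
    intro ξ η h hη heq
    have h1 : b η ∈ W (a η) := hab η η le_rfl hη
    have h2 : b ξ ∉ W (a η) := hWsep _ _ (hba ξ η h hη)
    rw [heq] at h2
    exact h2 h1
  have hinj : Set.InjOn b (Set.Iio omega1) := by
    intro ξ hξ η hη heq
    rcases lt_trichotomy ξ η with h | h | h
    · exact absurd heq (key ξ η h hη)
    · exact h
    · exact absurd heq.symm (key η ξ h hξ)
  -- uncountability
  have huncount : ¬ (b '' Set.Iio omega1).Countable := by
    intro h
    have hcnt : (Set.Iio omega1 : Set Ordinal).Countable :=
      (Set.mapsTo_image b _).countable_of_injOn hinj h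
    have hle := hcnt.le_aleph0
    rw [Ordinal.mk_Iio_ordinal] at hle
    simp only [omega1, Cardinal.card_ord] at hle
    rw [← Cardinal.lift_aleph0.{1, 0}, Cardinal.lift_le] at hle
    exact absurd hle (not_le.mpr Cardinal.aleph0_lt_aleph_one)
  refine ⟨hfree, hinj, huncount, ?_⟩
  -- discreteness
  rw [discreteTopology_iff_isOpen_singleton]
  rintro ⟨x, hx⟩
  obtain ⟨δ, hδ, rfl⟩ := hx
  have hδ1 : δ + 1 < omega1 := homeg.succ_lt hδ
  set U : Set X := (closure (b '' {ξ : Ordinal | ξ < δ}))ᶜ ∩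
      (closure (b '' {ξ : Ordinal | δ + 1 ≤ ξ ∧ ξ < omega1}))ᶜ with hU
  have hUopen : IsOpen U := (isClosed_closure.isOpen_compl).inter
    (isClosed_closure.isOpen_compl)
  have hbδ1 : b δ ∉ closure (b '' {ξ : Ordinal | ξ < δ}) := by
    intro h
    exact (Set.disjoint_left.mp (hfree δ hδ)) h
      (subset_closure (Set.mem_image_of_mem b (show δ ∈ {ξ : Ordinal | δ ≤ ξ ∧ ξ < omega1} from ⟨le_rfl, hδ⟩)))
  have hbδ2 : b δ ∉ closure (b '' {ξ : Ordinal | δ + 1 ≤ ξ ∧ ξ < omega1}) := by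
    intro h
    exact (Set.disjoint_left.mp (hfree (δ + 1) hδ1))
      (subset_closure (Set.mem_image_of_mem b (show δ ∈ {ξ : Ordinal | ξ < δ + 1} from Order.lt_succ δ))) h
  have hbU : b δ ∈ U := ⟨hbδ1, hbδ2⟩
  have hkey : ({⟨b δ, ⟨δ, hδ, rfl⟩⟩} : Set ↥(b '' Set.Iio omega1)) =
      Subtype.val ⁻¹' U := by
    ext ⟨y, hy⟩
    simp only [Set.mem_singleton_iff, Set.mem_preimage, Subtype.mk.injEq, Subtype.ext_iff]
    constructor
    · rintro rfl; exact hbU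
    · intro hyU
      obtain ⟨η, hη, rfl⟩ := hy
      rcases lt_trichotomy η δ with h | h | h
      · exact absurd (subset_closure (Set.mem_image_of_mem b (show η ∈ {ξ : Ordinal | ξ < δ} from h))) hyU.1
      · rw [h]
      · have : δ + 1 ≤ η := Order.succ_le_of_lt h
        exact absurd (subset_closure (Set.mem_image_of_mem b (show η ∈ {ξ : Ordinal | δ + 1 ≤ ξ ∧ ξ < omega1} from ⟨this, hη⟩))) hyU.2
  rw [hkey]
  exact hUopen.preimage continuous_subtype_val
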